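/- (Eckart–Young, Frobenius norm; optimality of the hard-thresholding denoiser.) Let A ∈ ℝ^{m×n} have singular value decomposition A = Σᵢ σᵢ uᵢvᵢᵀ with σ₁ ≥ σ₂ ≥ ⋯ ≥ 0, and let r ≤ min(m,n). Then the truncated SVD A_r = Σ_{i=1}^{r} σᵢ uᵢvᵢᵀ satisfies ‖A − A_r‖_F ≤ ‖A − B‖_F for every matrix B ∈ ℝ^{m×n} of rank at most r, and ‖A − A_r‖_F² = Σ_{i>r} σᵢ². -/

import Mathlib

open Matrix Finset

/-- Squared Frobenius norm of a real matrix. -/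
noncomputable def frobSq {m n : ℕ} (A : Matrix (Fin m) (Fin n) ℝ) : ℝ :=
  ∑ i, ∑ j, (A i j) ^ 2

section EckartYoungAux

lemma ey_dot_comb {n N : ℕ} {v : Fin N → Fin n → ℝ}
    (hv : ∀ i j, v i ⬝ᵥ v j = if i = j then (1:ℝ) else 0)
    (S : Finset (Fin N)) (a b : Fin N → ℝ) :
    (∑ i ∈ S, a i • v i) ⬝ᵥ (∑ i ∈ S, b i • v i) = ∑ i ∈ S, a i * b i := by
  have key : ∀ i i', (v i ⬝ᵥ v i') = if i = i' then (1:ℝ) else 0 := hv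
  calc (∑ i ∈ S, a i • v i) ⬝ᵥ (∑ i ∈ S, b i • v i)
      = ∑ j, (∑ i ∈ S, a i * v i j) * (∑ i' ∈ S, b i' * v i' j) := by
        simp [dotProduct, Finset.sum_apply, Pi.smul_apply, smul_eq_mul]
    _ = ∑ j, ∑ i ∈ S, ∑ i' ∈ S, (a i * b i') * (v i j * v i' j) := by
        refine Finset.sum_congr rfl fun j _ => ?_
        rw [Finset.sum_mul_sum]
        exact Finset.sum_congr rfl fun i _ => Finset.sum_congr rfl fun i' _ => by ring
    _ = ∑ i ∈ S, ∑ i' ∈ S, (a i * b i') * (v i ⬝ᵥ v i') := by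
        rw [Finset.sum_comm]
        refine Finset.sum_congr rfl fun i _ => ?_
        rw [Finset.sum_comm]
        refine Finset.sum_congr rfl fun i' _ => ?_
        rw [dotProduct, Finset.mul_sum]
    _ = ∑ i ∈ S, a i * b i := by
        simp only [key, mul_ite, mul_one, mul_zero, Finset.sum_ite_eq]
        exact Finset.sum_congr rfl fun i hi => by rw [if_pos hi]

lemma ey_frobSq_rows {m n : ℕ} (M : Matrix (Fin m) (Fin n) ℝ) :
    frobSq M = ∑ a, (fun j => M a j) ⬝ᵥ (fun j => M a j) := by
  unfold frobSq
  exact Finset.sum_congr rfl fun a _ => by simp [dotProduct, pow_two]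

lemma ey_row_of_comb {m n N : ℕ} (c : Fin N → ℝ) (u : Fin N → Fin m → ℝ) (v : Fin N → Fin n → ℝ)
    (S : Finset (Fin N)) (a : Fin m) :
    (fun j => (∑ i ∈ S, c i • Matrix.vecMulVec (u i) (v i)) a j)
      = ∑ i ∈ S, (c i * u i a) • v i := by
  funext j
  simp [Matrix.sum_apply, Matrix.vecMulVec_apply, Finset.sum_apply, mul_assoc]

/-- Frobenius norm squared of an orthonormal combination. -/
lemma ey_frobSq_comb {m n N : ℕ} (c : Fin N → ℝ) (u : Fin N → Fin m → ℝ)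
    (v : Fin N → Fin n → ℝ)
    (hu : ∀ i j, u i ⬝ᵥ u j = if i = j then (1:ℝ) else 0)
    (hv : ∀ i j, v i ⬝ᵥ v j = if i = j then (1:ℝ) else 0)
    (S : Finset (Fin N)) :
    frobSq (∑ i ∈ S, c i • Matrix.vecMulVec (u i) (v i)) = ∑ i ∈ S, c i ^ 2 := by
  rw [ey_frobSq_rows]
  calc ∑ a, (fun j => (∑ i ∈ S, c i • Matrix.vecMulVec (u i) (v i)) a j) ⬝ᵥ
        (fun j => (∑ i ∈ S, c i • Matrix.vecMulVec (u i) (v i)) a j)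
      = ∑ a, ∑ i ∈ S, (c i * u i a) * (c i * u i a) := by
        refine Finset.sum_congr rfl fun a _ => ?_
        rw [ey_row_of_comb, ey_dot_comb hv]
    _ = ∑ i ∈ S, c i ^ 2 * (u i ⬝ᵥ u i) := by
        rw [Finset.sum_comm]
        refine Finset.sum_congr rfl fun i _ => ?_
        rw [dotProduct, Finset.mul_sum]
        exact Finset.sum_congr rfl fun a _ => by ring
    _ = ∑ i ∈ S, c i ^ 2 := by
        refine Finset.sum_congr rfl fun i _ => ?_
        rw [hu, if_pos rfl, mul_one]

lemma ey_mulVec_comb {m n N : ℕ} (c : Fin N → ℝ) (u : Fin N → Fin m → ℝ)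
    (v : Fin N → Fin n → ℝ) (S : Finset (Fin N)) (x : Fin n → ℝ) :
    (∑ i ∈ S, c i • Matrix.vecMulVec (u i) (v i)).mulVec x
      = ∑ i ∈ S, (c i * (v i ⬝ᵥ x)) • u i := by
  funext a
  show (fun j => (∑ i ∈ S, c i • Matrix.vecMulVec (u i) (v i)) a j) ⬝ᵥ x = _
  rw [ey_row_of_comb]
  calc (∑ i ∈ S, (c i * u i a) • v i) ⬝ᵥ x
      = ∑ j, (∑ i ∈ S, (c i * u i a) * v i j) * x j := by
        simp [dotProduct, Finset.sum_apply, Pi.smul_apply, smul_eq_mul]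
    _ = ∑ j, ∑ i ∈ S, (c i * u i a) * (v i j * x j) := by
        refine Finset.sum_congr rfl fun j _ => ?_
        rw [Finset.sum_mul]
        exact Finset.sum_congr rfl fun i _ => by ring
    _ = ∑ i ∈ S, ∑ j, (c i * u i a) * (v i j * x j) := Finset.sum_comm
    _ = ∑ i ∈ S, (c i * (v i ⬝ᵥ x)) * u i a := by
        refine Finset.sum_congr rfl fun i _ => ?_
        rw [← Finset.mul_sum, dotProduct]
        ring
    _ = (∑ i ∈ S, (c i * (v i ⬝ᵥ x)) • u i) a := by
        simp [Finset.sum_apply, Pi.smul_apply, smul_eq_mul]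

lemma ey_inner_eq_dot {n : ℕ} (x y : EuclideanSpace ℝ (Fin n)) :
    (inner ℝ x y : ℝ) = (fun i => x i) ⬝ᵥ (fun i => y i) := by
  simp [PiLp.inner_apply, dotProduct, RCLike.inner_apply, mul_comm]

lemma ey_bessel_dot {n p : ℕ} (w : Fin p → Fin n → ℝ)
    (hw : ∀ i j, w i ⬝ᵥ w j = if i = j then (1:ℝ) else 0)
    (x : Fin n → ℝ) : ∑ k, (x ⬝ᵥ w k) ^ 2 ≤ x ⬝ᵥ x := by
  let W : Fin p → EuclideanSpace ℝ (Fin n) := fun k => (WithLp.equiv 2 _).symm (w k)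
  have hW : Orthonormal ℝ W := by
    rw [orthonormal_iff_ite]
    intro i j
    rw [ey_inner_eq_dot]
    exact hw i j
  have h := hW.sum_inner_products_le (s := Finset.univ) ((WithLp.equiv 2 _).symm x)
  have hnorm : ‖((WithLp.equiv 2 (Fin n → ℝ)).symm x : EuclideanSpace ℝ (Fin n))‖ ^ 2 = x ⬝ᵥ x := by
    rw [← real_inner_self_eq_norm_sq, ey_inner_eq_dot]
    rfl
  rw [hnorm] at h
  refine le_trans (le_of_eq ?_) h
  refine Finset.sum_congr rfl fun k _ => ?_
  rw [ey_inner_eq_dot]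
  rw [Real.norm_eq_abs, sq_abs]
  congr 1
  exact (dotProduct_comm _ _)

lemma ey_exists_ker_orthonormal {m n r : ℕ} (B : Matrix (Fin m) (Fin n) ℝ) (hB : B.rank ≤ r) :
    ∃ w : Fin (n - r) → Fin n → ℝ,
      (∀ i j, w i ⬝ᵥ w j = if i = j then (1:ℝ) else 0) ∧ ∀ k, B.mulVec (w k) = 0 := by
  classical
  set e : EuclideanSpace ℝ (Fin n) ≃ₗ[ℝ] (Fin n → ℝ) := WithLp.linearEquiv 2 ℝ (Fin n → ℝ) with he
  set K : Submodule ℝ (EuclideanSpace ℝ (Fin n)) :=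
    (LinearMap.ker B.mulVecLin).comap (e : EuclideanSpace ℝ (Fin n) →ₗ[ℝ] (Fin n → ℝ)) with hK
  have hKfin : Module.finrank ℝ K = Module.finrank ℝ (LinearMap.ker B.mulVecLin) := by
    rw [hK, Submodule.comap_equiv_eq_map_symm]
    exact LinearEquiv.finrank_map_eq e.symm _
  have hrank : B.rank + Module.finrank ℝ (LinearMap.ker B.mulVecLin) = n := by
    have := LinearMap.finrank_range_add_finrank_ker B.mulVecLin
    simpa [Matrix.rank] using this
  have hdim : n - r ≤ Module.finrank ℝ K := by
    rw [hKfin]; omega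
  let b := stdOrthonormalBasis ℝ K
  let w : Fin (n - r) → Fin n → ℝ := fun k => e ((b (Fin.castLE hdim k) : EuclideanSpace ℝ (Fin n)))
  refine ⟨w, fun i j => ?_, fun k => ?_⟩
  · have hb := b.orthonormal
    rw [orthonormal_iff_ite] at hb
    have h1 : (w i) ⬝ᵥ (w j) =
        (inner ℝ ((b (Fin.castLE hdim i) : K) : EuclideanSpace ℝ (Fin n))
               ((b (Fin.castLE hdim j) : K) : EuclideanSpace ℝ (Fin n)) : ℝ) := by
      rw [ey_inner_eq_dot]; rfl
    rw [h1, ← Submodule.coe_inner, hb]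
    simp [Fin.castLE, Fin.ext_iff]
  · have hmem : ((b (Fin.castLE hdim k) : K) : EuclideanSpace ℝ (Fin n)) ∈ K := by
      exact (b (Fin.castLE hdim k)).2
    have : B.mulVecLin (e ((b (Fin.castLE hdim k) : K) : EuclideanSpace ℝ (Fin n))) = 0 := hmem
    simpa [Matrix.mulVecLin] using this

lemma ey_filter_lt_eq_map {N r : ℕ} (hr : r ≤ N) :
    (Finset.univ.filter (fun i : Fin N => (i : ℕ) < r))
      = Finset.map ⟨Fin.castLE hr, Fin.castLE_injective hr⟩ Finset.univ := by
  ext i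
  simp only [Finset.mem_filter, Finset.mem_univ, true_and, Finset.mem_map,
    Function.Embedding.coeFn_mk]
  constructor
  · intro h; exact ⟨⟨i, h⟩, rfl⟩
  · rintro ⟨j, -, rfl⟩; exact j.2

lemma ey_card_filter_lt {N r : ℕ} (hr : r ≤ N) :
    (Finset.univ.filter (fun i : Fin N => (i : ℕ) < r)).card = r := by
  rw [ey_filter_lt_eq_map hr, Finset.card_map, Finset.card_univ, Fintype.card_fin]

lemma ey_card_filter_le {N r : ℕ} (hr : r ≤ N) :
    (Finset.univ.filter (fun i : Fin N => r ≤ (i : ℕ))).card = N - r := by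
  have h := Finset.card_filter_add_card_filter_not
    (s := (Finset.univ : Finset (Fin N))) (p := fun i : Fin N => (i : ℕ) < r)
  simp only [not_lt, Finset.card_univ, Fintype.card_fin] at h
  rw [ey_card_filter_lt hr] at h
  omega

lemma ey_tail_bound {N r : ℕ} (hr : r ≤ N) (σ : Fin N → ℝ)
    (hmono : Antitone σ) (hnn : ∀ i, 0 ≤ σ i) (c : Fin N → ℝ)
    (hc0 : ∀ i, 0 ≤ c i) (hc1 : ∀ i, c i ≤ 1)
    (hsum : (N : ℝ) - r ≤ ∑ i, c i) :
    ∑ i ∈ Finset.univ.filter (fun i : Fin N => r ≤ (i : ℕ)), σ i ^ 2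
      ≤ ∑ i, σ i ^ 2 * c i := by
  rcases lt_or_eq_of_le hr with hrN | hEq
  case inr =>
    have : (Finset.univ.filter (fun i : Fin N => r ≤ (i : ℕ))) = ∅ := by
      apply Finset.filter_false_of_mem; intro i _; have := i.isLt; omega
    rw [this, Finset.sum_empty]
    exact Finset.sum_nonneg fun i _ => mul_nonneg (sq_nonneg _) (hc0 i)
  case inl =>
    set t : ℝ := σ ⟨r, hrN⟩ ^ 2 with ht
    have ht0 : 0 ≤ t := sq_nonneg _
    set S₁ := Finset.univ.filter (fun i : Fin N => (i : ℕ) < r) with hS₁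
    set S₂ := Finset.univ.filter (fun i : Fin N => r ≤ (i : ℕ)) with hS₂
    have hsplit : ∀ f : Fin N → ℝ, ∑ i, f i = ∑ i ∈ S₁, f i + ∑ i ∈ S₂, f i := by
      intro f
      rw [hS₁, hS₂, ← Finset.sum_filter_add_sum_filter_not Finset.univ (fun i : Fin N => (i:ℕ) < r) f]
      congr 1
      apply Finset.sum_congr _ (fun _ _ => rfl)
      apply Finset.filter_congr; intro i _; simp [not_lt]
    have h1 : ∑ i ∈ S₁, t * c i ≤ ∑ i ∈ S₁, σ i ^ 2 * c i := by
      apply Finset.sum_le_sum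
      intro i hi
      apply mul_le_mul_of_nonneg_right _ (hc0 i)
      rw [ht]
      apply pow_le_pow_left₀ (hnn _) _ 2
      apply hmono
      simp only [hS₁, Finset.mem_filter] at hi
      exact le_of_lt (by rw [Fin.lt_def]; exact hi.2)
    have h2 : ∑ i ∈ S₂, t * (c i - 1) ≤ ∑ i ∈ S₂, σ i ^ 2 * (c i - 1) := by
      apply Finset.sum_le_sum
      intro i hi
      have hci : c i - 1 ≤ 0 := by linarith [hc1 i]
      have hσi : σ i ^ 2 ≤ t := by
        rw [ht]
        apply pow_le_pow_left₀ (hnn _) _ 2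
        apply hmono
        simp only [hS₂, Finset.mem_filter] at hi
        simpa [Fin.le_def] using hi.2
      nlinarith
    have hcard : ((S₂.card : ℝ)) = (N : ℝ) - r := by
      rw [hS₂, ey_card_filter_le hr]
      push_cast [Nat.cast_sub hr]
      ring
    have key : 0 ≤ ∑ i ∈ S₁, σ i ^ 2 * c i + ∑ i ∈ S₂, σ i ^ 2 * (c i - 1) := by
      have : ∑ i ∈ S₁, t * c i + ∑ i ∈ S₂, t * (c i - 1)
          = t * (∑ i, c i - ((N : ℝ) - r)) := by
        rw [hsplit c]
        rw [← Finset.mul_sum, ← Finset.mul_sum, Finset.sum_sub_distrib, Finset.sum_const,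
          nsmul_eq_mul, mul_one, hcard]
        ring
      nlinarith [mul_nonneg ht0 (sub_nonneg.mpr hsum)]
    have expand : ∑ i ∈ S₂, σ i ^ 2 * (c i - 1) = ∑ i ∈ S₂, σ i ^ 2 * c i - ∑ i ∈ S₂, σ i ^ 2 := by
      rw [← Finset.sum_sub_distrib]
      exact Finset.sum_congr rfl fun i _ => by ring
    rw [hsplit (fun i => σ i ^ 2 * c i)]
    rw [expand] at key
    linarith

lemma ey_sum_c_ge {n N p : ℕ} (hNn : N ≤ n) (v : Fin N → Fin n → ℝ)
    (hv : ∀ i j, v i ⬝ᵥ v j = if i = j then (1:ℝ) else 0)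
    (w : Fin p → Fin n → ℝ)
    (hw : ∀ i j, w i ⬝ᵥ w j = if i = j then (1:ℝ) else 0) :
    (p : ℝ) - ((n : ℝ) - N) ≤ ∑ i : Fin N, ∑ k : Fin p, (v i ⬝ᵥ w k) ^ 2 := by
  classical
  set E := EuclideanSpace ℝ (Fin n)
  let v' : Fin n → E := fun i => if h : (i : ℕ) < N then (WithLp.equiv 2 _).symm (v ⟨i, h⟩) else 0
  set s : Set (Fin n) := {i | (i : ℕ) < N} with hs
  have hv' : Orthonormal ℝ (s.restrict v') := by
    rw [orthonormal_iff_ite]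
    rintro ⟨i, hi⟩ ⟨j, hj⟩
    have hi' : (i : ℕ) < N := hi
    have hj' : (j : ℕ) < N := hj
    have : (inner ℝ (s.restrict v' ⟨i, hi⟩) (s.restrict v' ⟨j, hj⟩) : ℝ)
        = v ⟨i, hi'⟩ ⬝ᵥ v ⟨j, hj'⟩ := by
      show (inner ℝ (v' i) (v' j) : ℝ) = _
      rw [ey_inner_eq_dot]
      simp only [v', dif_pos hi', dif_pos hj']
      rfl
    rw [this, hv]
    simp [Subtype.ext_iff, Fin.ext_iff]
  have hcard : Module.finrank ℝ E = Fintype.card (Fin n) := by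
    simp [E, finrank_euclideanSpace_fin]
  obtain ⟨b, hb⟩ := hv'.exists_orthonormalBasis_extension_of_card_eq hcard
  have parseval : ∀ k, ∑ j : Fin n, ((fun t => b j t) ⬝ᵥ w k) ^ 2 = 1 := by
    intro k
    have h := b.sum_inner_mul_inner ((WithLp.equiv 2 _).symm (w k) : E)
      ((WithLp.equiv 2 _).symm (w k) : E)
    have hWW : (inner ℝ ((WithLp.equiv 2 _).symm (w k) : E) ((WithLp.equiv 2 _).symm (w k) : E) : ℝ)
        = (1 : ℝ) := by
      rw [ey_inner_eq_dot]
      have := hw k k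
      simpa using this
    rw [hWW] at h
    rw [← h]
    refine Finset.sum_congr rfl fun j _ => ?_
    have hj : (inner ℝ ((WithLp.equiv 2 _).symm (w k) : E) (b j) : ℝ) = (fun t => b j t) ⬝ᵥ w k := by
      rw [ey_inner_eq_dot]; exact dotProduct_comm _ _
    have hj' : (inner ℝ (b j) ((WithLp.equiv 2 _).symm (w k) : E) : ℝ) = (fun t => b j t) ⬝ᵥ w k := by
      rw [ey_inner_eq_dot]; rfl
    rw [hj, hj']; ring
  have hsplit : ∀ k, ∑ i : Fin N, (v i ⬝ᵥ w k) ^ 2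
      = 1 - ∑ j ∈ Finset.univ.filter (fun j : Fin n => ¬ ((j : ℕ) < N)),
          ((fun t => b j t) ⬝ᵥ w k) ^ 2 := by
    intro k
    have h1 : ∑ j ∈ Finset.univ.filter (fun j : Fin n => (j : ℕ) < N),
        ((fun t => b j t) ⬝ᵥ w k) ^ 2 = ∑ i : Fin N, (v i ⬝ᵥ w k) ^ 2 := by
      rw [ey_filter_lt_eq_map hNn, Finset.sum_map]
      refine Finset.sum_congr rfl fun i _ => ?_
      have hval : ((Fin.castLE hNn i : Fin n) : ℕ) < N := i.2
      have hmem : (Fin.castLE hNn i) ∈ s := hval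
      simp only [Function.Embedding.coeFn_mk]
      rw [hb _ hmem]
      have hvv : v' (Fin.castLE hNn i) = (WithLp.equiv 2 _).symm (v i) := by
        simp only [v', dif_pos hval]
        congr 1
      rw [hvv]
      rfl
    have h2 := Finset.sum_filter_add_sum_filter_not Finset.univ
      (fun j : Fin n => (j : ℕ) < N) (fun j => ((fun t => b j t) ⬝ᵥ w k) ^ 2)
    rw [h1] at h2
    rw [← parseval k] at *
    linarith [h2]
  have hbound : ∑ j ∈ Finset.univ.filter (fun j : Fin n => ¬ ((j : ℕ) < N)),
      ∑ k : Fin p, ((fun t => b j t) ⬝ᵥ w k) ^ 2 ≤ ((n : ℝ) - N) := by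
    have hcard2 : (Finset.univ.filter (fun j : Fin n => ¬ ((j : ℕ) < N))).card = n - N := by
      have h := Finset.card_filter_add_card_filter_not
        (s := (Finset.univ : Finset (Fin n))) (p := fun j : Fin n => (j : ℕ) < N)
      rw [ey_card_filter_lt hNn] at h
      simp only [Finset.card_univ, Fintype.card_fin] at h
      omega
    calc ∑ j ∈ Finset.univ.filter (fun j : Fin n => ¬ ((j : ℕ) < N)),
        ∑ k : Fin p, ((fun t => b j t) ⬝ᵥ w k) ^ 2
        ≤ ∑ j ∈ Finset.univ.filter (fun j : Fin n => ¬ ((j : ℕ) < N)), (1 : ℝ) := by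
          refine Finset.sum_le_sum fun j _ => ?_
          have h := ey_bessel_dot w hw (fun t => b j t)
          have hbj : ((fun t => b j t) ⬝ᵥ fun t => b j t) = 1 := by
            have := b.orthonormal
            rw [orthonormal_iff_ite] at this
            have h2 := this j j
            rw [ey_inner_eq_dot] at h2
            simpa using h2
          rw [hbj] at h
          exact h
      _ = ((n : ℝ) - N) := by
          rw [Finset.sum_const, hcard2, nsmul_eq_mul, mul_one]
          push_cast [Nat.cast_sub hNn]
          ring
  have swap : ∑ i : Fin N, ∑ k : Fin p, (v i ⬝ᵥ w k) ^ 2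
      = ∑ k : Fin p, ∑ i : Fin N, (v i ⬝ᵥ w k) ^ 2 := Finset.sum_comm
  rw [swap]
  have : ∑ k : Fin p, ∑ i : Fin N, (v i ⬝ᵥ w k) ^ 2
      = (p : ℝ) - ∑ k : Fin p, ∑ j ∈ Finset.univ.filter (fun j : Fin n => ¬ ((j : ℕ) < N)),
          ((fun t => b j t) ⬝ᵥ w k) ^ 2 := by
    rw [Finset.sum_congr rfl fun k _ => hsplit k, Finset.sum_sub_distrib, Finset.sum_const,
      Finset.card_univ, Fintype.card_fin, nsmul_eq_mul, mul_one]
  rw [this, Finset.sum_comm]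
  linarith [hbound]

end EckartYoungAux

/-- **Eckart–Young theorem (Frobenius norm); optimality of hard-thresholding denoising.**
Let `A = ∑ᵢ σᵢ uᵢvᵢᵀ` be an SVD of `A ∈ ℝ^{m×n}` (with `σ₁ ≥ σ₂ ≥ ⋯ ≥ 0` and orthonormal
families `uᵢ`, `vᵢ`), and `r ≤ min(m,n)`. Then the truncated SVD `A_r = ∑_{i<r} σᵢ uᵢvᵢᵀ`
satisfies `‖A − A_r‖_F ≤ ‖A − B‖_F` for every `B` of rank at most `r`, and
`‖A − A_r‖_F² = ∑_{i ≥ r} σᵢ²`. -/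
theorem stmt_14 {m n : ℕ} (A : Matrix (Fin m) (Fin n) ℝ)
    (σ : Fin (min m n) → ℝ) (u : Fin (min m n) → Fin m → ℝ) (v : Fin (min m n) → Fin n → ℝ)
    (hσ_mono : Antitone σ) (hσ_nonneg : ∀ i, 0 ≤ σ i)
    (hu : ∀ i j, u i ⬝ᵥ u j = if i = j then (1 : ℝ) else 0)
    (hv : ∀ i j, v i ⬝ᵥ v j = if i = j then (1 : ℝ) else 0)
    (hA : A = ∑ i, σ i • Matrix.vecMulVec (u i) (v i))
    (r : ℕ) (hr : r ≤ min m n) :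
    (∀ B : Matrix (Fin m) (Fin n) ℝ, B.rank ≤ r →
      Real.sqrt (frobSq (A - ∑ i ∈ Finset.univ.filter (fun i : Fin (min m n) => (i : ℕ) < r),
          σ i • Matrix.vecMulVec (u i) (v i)))
        ≤ Real.sqrt (frobSq (A - B))) ∧
    frobSq (A - ∑ i ∈ Finset.univ.filter (fun i : Fin (min m n) => (i : ℕ) < r),
        σ i • Matrix.vecMulVec (u i) (v i))
      = ∑ i ∈ Finset.univ.filter (fun i : Fin (min m n) => r ≤ (i : ℕ)), (σ i) ^ 2 := by
  classical
  have hNn : min m n ≤ n := min_le_right m n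
  have hrn : r ≤ n := le_trans hr hNn
  set S₁ := Finset.univ.filter (fun i : Fin (min m n) => (i : ℕ) < r) with hS₁
  set S₂ := Finset.univ.filter (fun i : Fin (min m n) => r ≤ (i : ℕ)) with hS₂
  have hAr : A - ∑ i ∈ S₁, σ i • Matrix.vecMulVec (u i) (v i)
      = ∑ i ∈ S₂, σ i • Matrix.vecMulVec (u i) (v i) := by
    have hfil : Finset.univ.filter (fun i : Fin (min m n) => ¬ ((i : ℕ) < r)) = S₂ := by
      rw [hS₂]; apply Finset.filter_congr; intro i _; simp [not_lt]
    rw [hA, ← Finset.sum_filter_add_sum_filter_not Finset.univ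
      (fun i : Fin (min m n) => (i : ℕ) < r) (fun i => σ i • Matrix.vecMulVec (u i) (v i)),
      hfil, ← hS₁, add_sub_cancel_left]
  have heq : frobSq (A - ∑ i ∈ S₁, σ i • Matrix.vecMulVec (u i) (v i))
      = ∑ i ∈ S₂, (σ i) ^ 2 := by
    rw [hAr, ey_frobSq_comb σ u v hu hv S₂]
  refine ⟨?_, heq⟩
  intro B hB
  obtain ⟨w, hw, hker⟩ := ey_exists_ker_orthonormal B hB
  set c : Fin (min m n) → ℝ := fun i => ∑ k, (v i ⬝ᵥ w k) ^ 2 with hc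
  have hc0 : ∀ i, 0 ≤ c i := fun i => Finset.sum_nonneg fun k _ => sq_nonneg _
  have hc1 : ∀ i, c i ≤ 1 := by
    intro i
    have h := ey_bessel_dot w hw (v i)
    have : v i ⬝ᵥ v i = 1 := by rw [hv, if_pos rfl]
    rw [this] at h
    exact h
  have hsum : ((min m n : ℕ) : ℝ) - r ≤ ∑ i, c i := by
    have h := ey_sum_c_ge hNn v hv w hw
    have hcast : ((n - r : ℕ) : ℝ) = (n : ℝ) - r := by
      push_cast [Nat.cast_sub hrn]; ring
    rw [hcast] at h
    refine le_trans (le_of_eq ?_) h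
    have : ((min m n : ℕ) : ℝ) ≤ (n : ℝ) := by exact_mod_cast hNn
    ring
  have hstep2 : ∑ i ∈ S₂, (σ i) ^ 2 ≤ ∑ i, σ i ^ 2 * c i :=
    ey_tail_bound hr σ hσ_mono hσ_nonneg c hc0 hc1 hsum
  -- step 3 : ∑ σ² c = ∑ₖ ‖(A-B)wₖ‖²
  have hAw : ∀ k, (A - B).mulVec (w k) = ∑ i, (σ i * (v i ⬝ᵥ w k)) • u i := by
    intro k
    rw [Matrix.sub_mulVec, hker k, sub_zero, hA, ey_mulVec_comb]
  have hstep3 : ∑ i, σ i ^ 2 * c i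
      = ∑ k, ((A - B).mulVec (w k)) ⬝ᵥ ((A - B).mulVec (w k)) := by
    calc ∑ i, σ i ^ 2 * c i
        = ∑ i, ∑ k, σ i ^ 2 * (v i ⬝ᵥ w k) ^ 2 := by
          refine Finset.sum_congr rfl fun i _ => ?_
          rw [hc, Finset.mul_sum]
      _ = ∑ k, ∑ i, σ i ^ 2 * (v i ⬝ᵥ w k) ^ 2 := Finset.sum_comm
      _ = ∑ k, ((A - B).mulVec (w k)) ⬝ᵥ ((A - B).mulVec (w k)) := by
          refine Finset.sum_congr rfl fun k _ => ?_
          rw [hAw k, ey_dot_comb hu]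
          exact Finset.sum_congr rfl fun i _ => by ring
  -- step 4 : ∑ₖ ‖(A-B)wₖ‖² ≤ frobSq (A - B)
  have hstep4 : ∑ k, ((A - B).mulVec (w k)) ⬝ᵥ ((A - B).mulVec (w k)) ≤ frobSq (A - B) := by
    have hMv : ∀ k, ((A - B).mulVec (w k)) ⬝ᵥ ((A - B).mulVec (w k))
        = ∑ a, ((fun j => (A - B) a j) ⬝ᵥ w k) ^ 2 := by
      intro k
      simp [dotProduct, Matrix.mulVec, pow_two]
    rw [ey_frobSq_rows (A - B)]
    calc ∑ k, ((A - B).mulVec (w k)) ⬝ᵥ ((A - B).mulVec (w k))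
        = ∑ k, ∑ a, ((fun j => (A - B) a j) ⬝ᵥ w k) ^ 2 :=
          Finset.sum_congr rfl fun k _ => hMv k
      _ = ∑ a, ∑ k, ((fun j => (A - B) a j) ⬝ᵥ w k) ^ 2 := Finset.sum_comm
      _ ≤ ∑ a, (fun j => (A - B) a j) ⬝ᵥ (fun j => (A - B) a j) :=
          Finset.sum_le_sum fun a _ => ey_bessel_dot w hw _
  apply Real.sqrt_le_sqrt
  rw [heq]
  linarith
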